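/- Let G be a finite connected graph that is not a star. Then G has a dominating set of minimum cardinality γ(G) that contains no leaf of G. -/

import Mathlib

open SimpleGraph

/-- A dominating set: every vertex outside `S` has a neighbor in `S`. -/
def IsDominatingSet {V : Type} (G : SimpleGraph V) (S : Set V) : Prop :=
  ∀ v ∉ S, ∃ u ∈ S, G.Adj u v

/-- A total dominating set: every vertex has a neighbor in `S`. -/
def IsTotalDominatingSet {V : Type} (G : SimpleGraph V) (S : Set V) : Prop :=
  ∀ v : V, ∃ u ∈ S, G.Adj u v

/-- `u` is within distance two of `v`. -/
def WithinTwo {V : Type} (G : SimpleGraph V) (u v : V) : Prop :=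
  G.Adj u v ∨ ∃ w, G.Adj u w ∧ G.Adj w v

/-- A semitotal dominating set: a dominating set in which every vertex is within
distance two of another vertex of the set. -/
def IsSemitotalDominatingSet {V : Type} (G : SimpleGraph V) (S : Set V) : Prop :=
  IsDominatingSet G S ∧ ∀ v ∈ S, ∃ u ∈ S, u ≠ v ∧ WithinTwo G u v

/-- The domination number `γ(G)`. -/
noncomputable def dominationNumber {V : Type} (G : SimpleGraph V) : ℕ :=
  sInf {n | ∃ S : Set V, IsDominatingSet G S ∧ S.ncard = n}

/-- The total domination number `γ_t(G)`. -/
noncomputable def totalDominationNumber {V : Type} (G : SimpleGraph V) : ℕ :=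
  sInf {n | ∃ S : Set V, IsTotalDominatingSet G S ∧ S.ncard = n}

/-- The semitotal domination number `γ_t2(G)`. -/
noncomputable def semitotalDominationNumber {V : Type} (G : SimpleGraph V) : ℕ :=
  sInf {n | ∃ S : Set V, IsSemitotalDominatingSet G S ∧ S.ncard = n}

/-- A leaf: a vertex of degree one. -/
def IsLeaf {V : Type} (G : SimpleGraph V) (v : V) : Prop :=
  (G.neighborSet v).ncard = 1

/-- A support vertex: a vertex adjacent to a leaf. -/
def IsSupport {V : Type} (G : SimpleGraph V) (v : V) : Prop :=
  ∃ u, G.Adj v u ∧ IsLeaf G u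

/-- A star: a graph isomorphic to `K_{1,m}` for some `m ≥ 1`. -/
def IsStar {V : Type} (G : SimpleGraph V) : Prop :=
  ∃ m : ℕ, 1 ≤ m ∧ Nonempty (G ≃g completeBipartiteGraph Unit (Fin m))

/-- The graph obtained from the disjoint union of `G` and `H` by adding
the single edge joining `v : V` to `w : W`. -/
def attach {V W : Type} (G : SimpleGraph V) (H : SimpleGraph W) (v : V) (w : W) :
    SimpleGraph (V ⊕ W) where
  Adj x y :=
    match x, y with
    | Sum.inl a, Sum.inl b => G.Adj a b
    | Sum.inr a, Sum.inr b => H.Adj a b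
    | Sum.inl a, Sum.inr b => a = v ∧ b = w
    | Sum.inr a, Sum.inl b => b = v ∧ a = w
  symm := ⟨by
    rintro (a | a) (b | b) h
    · exact G.adj_symm h
    · exact ⟨h.1, h.2⟩
    · exact ⟨h.1, h.2⟩
    · exact H.adj_symm h⟩
  loopless := ⟨by
    rintro (a | a) h
    · exact G.irrefl h
    · exact H.irrefl h⟩

/-- The statuses used to label the vertices of trees in the family `𝒯`. -/
inductive Label : Type
  | A | B | C
deriving DecidableEq

/-- The labeling of the path `P₅` assigning `A` to the two support vertices,
`C` to the two leaves and `B` to the center. -/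
def pathLabel : Fin 5 → Label
  | 0 => Label.C
  | 1 => Label.A
  | 2 => Label.B
  | 3 => Label.A
  | 4 => Label.C

/-- The family `𝒯` of labeled trees: it contains the labeled path `P₅`, and is closed
under operation `𝒪₁` (attach a new leaf labeled `C` to a vertex labeled `A`), operation
`𝒪₂` (attach a labeled path `P₅` to a degree-one vertex labeled `C`), and under
isomorphism of labeled graphs. -/
inductive TFamily : ∀ {V : Type}, SimpleGraph V → (V → Label) → Prop
  | base : TFamily (SimpleGraph.pathGraph 5) pathLabel
  | op1 {V : Type} {G : SimpleGraph V} {f : V → Label} (v : V)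
      (hv : f v = Label.A) (h : TFamily G f) :
      TFamily (attach G (⊥ : SimpleGraph (Fin 1)) v 0)
        (Sum.elim f (fun _ => Label.C))
  | op2 {V : Type} {G : SimpleGraph V} {f : V → Label} (v : V)
      (hv : f v = Label.C) (hdeg : (G.neighborSet v).ncard = 1) (h : TFamily G f) :
      TFamily (attach G (SimpleGraph.pathGraph 5) v 0) (Sum.elim f pathLabel)
  | iso {V W : Type} {G : SimpleGraph V} {H : SimpleGraph W} {f : V → Label}
      (e : G ≃g H) (h : TFamily G f) : TFamily H (fun w => f (e.symm w))

/-- The subdivided star with `t` leaves: center `none`, and for each `i : Fin t`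
a path `none — some (i,0) — some (i,1)`. -/
def subdividedStar (t : ℕ) : SimpleGraph (Option (Fin t × Fin 2)) :=
  SimpleGraph.fromRel (fun x y =>
    match x, y with
    | none, some p => p.2 = 0
    | some p, some q => p.1 = q.1 ∧ p.2 = 0 ∧ q.2 = 1
    | _, _ => False)

/-- The tree `Y` with three leaves, obtained from the star `K_{1,3}` with center `0`
by subdividing exactly one edge: edges `0-1`, `0-2`, `0-3`, `3-4`.  Its leaves are
`1`, `2`, `4`; the leaf-neighbors of the center are `1` and `2`. -/
def Ytree : SimpleGraph (Fin 5) :=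
  SimpleGraph.fromRel (fun x y =>
    (x = 0 ∧ y = 1) ∨ (x = 0 ∧ y = 2) ∨ (x = 0 ∧ y = 3) ∨ (x = 3 ∧ y = 4))

/-- An almost dominating set of `G` relative to `v`: dominates every vertex except
possibly `v`. -/
def IsAlmostDominatingSet {V : Type} (G : SimpleGraph V) (v : V) (S : Set V) : Prop :=
  ∀ w, w ≠ v → w ∉ S → ∃ u ∈ S, G.Adj u w

/-- The almost domination number `γ(G; v)`. -/
noncomputable def almostDominationNumber {V : Type} (G : SimpleGraph V) (v : V) : ℕ :=
  sInf {n | ∃ S : Set V, IsAlmostDominatingSet G v S ∧ S.ncard = n}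

/-- The family `𝒪` of trees: all trees obtainable from the path `P₄` by a finite
sequence of the operations `𝒪₁`–`𝒪₄` (and taking isomorphic copies). -/
inductive OFamily : ∀ {V : Type}, SimpleGraph V → Prop
  | base : OFamily (SimpleGraph.pathGraph 4)
  | op1 {V : Type} {G : SimpleGraph V} (v : V)
      (hv : ∃ S : Set V, IsSemitotalDominatingSet G S ∧
        S.ncard = semitotalDominationNumber G ∧ v ∈ S)
      (h : OFamily G) :
      OFamily (attach G (⊥ : SimpleGraph (Fin 1)) v 0)
  | op2short {V : Type} {G : SimpleGraph V} (v : V)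
      (hv : almostDominationNumber G v = dominationNumber G) (h : OFamily G) :
      OFamily (attach G (SimpleGraph.pathGraph 2) v 0)
  | op2long {V : Type} {G : SimpleGraph V} (v : V)
      (hv : almostDominationNumber G v = dominationNumber G) (h : OFamily G) :
      OFamily (attach G (SimpleGraph.pathGraph 5) v 0)
  | op3 {V : Type} {G : SimpleGraph V} (v : V) (t : ℕ) (ht : 2 ≤ t) (h : OFamily G) :
      OFamily (attach G (subdividedStar t) v none)
  | op4 {V : Type} {G : SimpleGraph V} (v : V) (h : OFamily G) :
      OFamily (attach G Ytree v 1)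
  | iso {V W : Type} {G : SimpleGraph V} {H : SimpleGraph W}
      (e : G ≃g H) (h : OFamily G) : OFamily H

/-- If a connected graph has two adjacent vertices whose neighborhoods are exactly
each other, it is a star `K_{1,1}`. -/
lemma star_of_two_leaves {V : Type} (G : SimpleGraph V) (hc : G.Connected)
    (u v : V) (huv : G.Adj u v) (hu : G.neighborSet u = {v})
    (hv : G.neighborSet v = {u}) : IsStar G := by
  classical
  have hne : u ≠ v := huv.ne
  have step : ∀ {a b : V}, G.Adj a b → (a = u ∨ a = v) → (b = u ∨ b = v) := by
    rintro a b hab (rfl | rfl)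
    · right
      have : b ∈ G.neighborSet a := hab
      rw [hu] at this; exact this
    · left
      have : b ∈ G.neighborSet a := hab
      rw [hv] at this; exact this
  have key2 : ∀ {a x : V} (_ : G.Walk a x), (a = u ∨ a = v) → (x = u ∨ x = v) := by
    intro a x w
    induction w with
    | nil => exact id
    | cons hab _ ih => intro ha; exact ih (step hab ha)
  have key : ∀ x : V, x = u ∨ x = v := fun x =>
    key2 (hc.preconnected u x).some (Or.inl rfl)
  refine ⟨1, le_refl 1, ⟨?_⟩⟩
  refine ⟨⟨fun x => if x = u then Sum.inl () else Sum.inr 0,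
    fun s => Sum.elim (fun _ => u) (fun _ => v) s, ?_, ?_⟩, ?_⟩
  · intro x
    rcases key x with rfl | rfl
    · simp
    · simp [hne.symm]
  · rintro (a | a)
    · simp
    · simp [hne.symm, Subsingleton.elim (0 : Fin 1) a]
  · intro x y
    rcases key x with rfl | rfl <;> rcases key y with rfl | rfl <;>
      simp_all [hne, hne.symm, huv, huv.symm, G.irrefl]

/-- A finite connected graph that is not a star has a minimum
dominating set containing no leaf. -/
theorem exists_min_dominating_set_without_leaf {V : Type} [Fintype V] (G : SimpleGraph V)
    (hc : G.Connected) (hs : ¬ IsStar G) :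
    ∃ S : Set V, IsDominatingSet G S ∧ S.ncard = dominationNumber G ∧
      ∀ v ∈ S, ¬ IsLeaf G v := by
  classical
  have hmem : dominationNumber G ∈
      {n | ∃ S : Set V, IsDominatingSet G S ∧ S.ncard = n} := by
    apply Nat.sInf_mem
    exact ⟨(Set.univ : Set V).ncard, Set.univ,
      fun v hv => absurd (Set.mem_univ v) hv, rfl⟩
  obtain ⟨S₀, hS₀, hcard₀⟩ := hmem
  have main : ∀ k : ℕ, ∀ S : Set V, IsDominatingSet G S →
      S.ncard = dominationNumber G → {x ∈ S | IsLeaf G x}.ncard ≤ k →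
      ∃ S' : Set V, IsDominatingSet G S' ∧ S'.ncard = dominationNumber G ∧
        ∀ v ∈ S', ¬ IsLeaf G v := by
    intro k
    induction k with
    | zero =>
      intro S hd hcard hle
      refine ⟨S, hd, hcard, ?_⟩
      intro v hv hleaf
      have hmm : v ∈ {x ∈ S | IsLeaf G x} := ⟨hv, hleaf⟩
      have hempty : {x ∈ S | IsLeaf G x} = ∅ :=
        Set.ncard_eq_zero (Set.toFinite _) |>.mp (Nat.le_zero.mp hle)
      rw [hempty] at hmm
      exact hmm
    | succ k ih =>
      intro S hd hcard hle
      by_cases hemp : {x ∈ S | IsLeaf G x} = ∅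
      · refine ⟨S, hd, hcard, ?_⟩
        intro v hv hleaf
        have : v ∈ {x ∈ S | IsLeaf G x} := ⟨hv, hleaf⟩
        rw [hemp] at this
        exact absurd this (Set.notMem_empty v)
      · obtain ⟨v, hvS, hvleaf⟩ : ∃ v, v ∈ S ∧ IsLeaf G v := by
          obtain ⟨v, hv⟩ := Set.nonempty_iff_ne_empty.mpr hemp
          exact ⟨v, hv.1, hv.2⟩
        obtain ⟨u, hu⟩ := Set.ncard_eq_one.mp hvleaf
        have hadj : G.Adj v u := by
          have : u ∈ G.neighborSet v := by rw [hu]; rfl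
          exact this
        have hγpos : 1 ≤ dominationNumber G := by
          rw [← hcard]
          exact (Set.ncard_pos (Set.toFinite S)).mpr ⟨v, hvS⟩
        -- the only neighbor of v is u
        have honly : ∀ w, G.Adj v w → w = u := by
          intro w hw
          have : w ∈ G.neighborSet v := hw
          rw [hu] at this; exact this
        by_cases huS : u ∈ S
        · -- S \ {v} is a smaller dominating set: contradiction
          exfalso
          have hdom' : IsDominatingSet G (S \ {v}) := by
            intro w hw
            by_cases hwv : w = v
            · subst hwv
              exact ⟨u, ⟨huS, by simp [hadj.ne']⟩, hadj.symm⟩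
            · have hwS : w ∉ S := fun h => hw ⟨h, hwv⟩
              obtain ⟨x, hxS, hxw⟩ := hd w hwS
              have hxv : x ≠ v := by
                rintro rfl
                exact hwS (honly w hxw ▸ huS)
              exact ⟨x, ⟨hxS, hxv⟩, hxw⟩
          have hlt : (S \ {v}).ncard < dominationNumber G := by
            rw [← hcard]
            exact Set.ncard_diff_singleton_lt_of_mem hvS (Set.toFinite S)
          have hmem' : (S \ {v}).ncard ∈
              {n | ∃ T : Set V, IsDominatingSet G T ∧ T.ncard = n} := by
            exact ⟨S \ {v}, hdom', rfl⟩
          exact absurd (Nat.sInf_le hmem') (not_le.mpr hlt)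
        · -- swap v for u
          set S' := insert u (S \ {v}) with hS'def
          have hdom' : IsDominatingSet G S' := by
            intro w hw
            by_cases hwv : w = v
            · subst hwv
              exact ⟨u, Set.mem_insert _ _, hadj.symm⟩
            · have hwS : w ∉ S := by
                intro h
                exact hw (Set.mem_insert_of_mem _ ⟨h, hwv⟩)
              obtain ⟨x, hxS, hxw⟩ := hd w hwS
              have hxv : x ≠ v := by
                rintro rfl
                exact hw (honly w hxw ▸ Set.mem_insert u _)
              exact ⟨x, Set.mem_insert_of_mem _ ⟨hxS, hxv⟩, hxw⟩
          have hcard' : S'.ncard = dominationNumber G := by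
            rw [hS'def, Set.ncard_exchange huS hvS, hcard]
          -- u is not a leaf
          have huleaf : ¬ IsLeaf G u := by
            intro hul
            obtain ⟨w, hw⟩ := Set.ncard_eq_one.mp hul
            have hvw : v ∈ G.neighborSet u := hadj.symm
            rw [hw] at hvw
            subst hvw
            exact hs (star_of_two_leaves G hc u v hadj.symm hw hu)
          have hsub : {x ∈ S' | IsLeaf G x} ⊆ {x ∈ S | IsLeaf G x} \ {v} := by
            rintro x ⟨hxS', hxl⟩
            rcases hxS' with rfl | ⟨hxS, hxv⟩
            · exact absurd hxl huleaf
            · exact ⟨⟨hxS, hxl⟩, hxv⟩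
          have hcount : {x ∈ S' | IsLeaf G x}.ncard ≤ k := by
            have h1 : ({x ∈ S | IsLeaf G x} \ {v}).ncard <
                {x ∈ S | IsLeaf G x}.ncard :=
              Set.ncard_diff_singleton_lt_of_mem ⟨hvS, hvleaf⟩ (Set.toFinite _)
            have h2 := Set.ncard_le_ncard hsub (Set.toFinite _)
            omega
          exact ih S' hdom' hcard' hcount
  exact main {x ∈ S₀ | IsLeaf G x}.ncard S₀ hS₀ hcard₀ le_rfl
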